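/- arXiv:1312.2461 — 2 statements merged into one kernel-verified Lean document; each statement's English description precedes it below -/
import Mathlib

section
/- For real w₀ and w ∈ ℝ³, m a unit vector, p ∈ [0,1), η = √(1-p²), the quadratic form (1/4)|∇w₀|² + η‖∇w‖² + (1-η)|∇(w·m)|² - p ∇w₀·∇(w·m) (with ∇ replaced by arbitrary vectors a₀ ∈ ℝᵈ for w₀ and a matrix A ∈ ℝ^{3×d} for w) is bounded below by λ₋(|a₀|² + |Aᵀm|²) + (η²/2)‖A‖², where λ₋ is the smaller eigenvalue of [[1/4, -p/2], [-p/2, 1-η²/2]]. -/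
open RealInnerProductSpace

lemma amgm_aux (α β p X Y : ℝ) (hα : 0 ≤ α) (hβ : 0 ≤ β)
    (hαβ : 4 * α * β = p ^ 2) (htr : 1/4 ≤ α + β) :
    p * (X * Y) ≤ α * X ^ 2 + β * Y ^ 2 := by
  have e1 : 4 * α * (α * X ^ 2 + β * Y ^ 2 - p * (X * Y)) = (2 * α * X - p * Y) ^ 2 := by
    linear_combination Y ^ 2 * hαβ
  have e2 : 4 * β * (α * X ^ 2 + β * Y ^ 2 - p * (X * Y)) = (2 * β * Y - p * X) ^ 2 := by
    linear_combination X ^ 2 * hαβ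
  nlinarith [e1, e2, sq_nonneg (2 * α * X - p * Y), sq_nonneg (2 * β * Y - p * X), htr]

lemma key_real (p η lam X Y S I : ℝ) (hp0 : 0 ≤ p)
    (hX : 0 ≤ X) (hY : 0 ≤ Y)
    (hη0 : 0 ≤ η) (hη1 : η ≤ 1)
    (hα : 0 ≤ 1/4 - lam) (hβ : 0 ≤ 1 - η^2/2 - lam)
    (hαβ : 4 * (1/4 - lam) * (1 - η^2/2 - lam) = p^2)
    (htr : 1/4 ≤ (1/4 - lam) + (1 - η^2/2 - lam))
    (hYS : Y^2 ≤ S) (hI : I ≤ X * Y) :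
    lam * (X^2 + Y^2) + (η^2/2) * S ≤ (1/4) * X^2 + η * S + (1-η) * Y^2 - p * I := by
  have hG : p * (X * Y) ≤ (1/4 - lam) * X ^ 2 + (1 - η^2/2 - lam) * Y ^ 2 :=
    amgm_aux _ _ _ _ _ hα hβ hαβ htr
  have h1 : p * I ≤ p * (X * Y) := by nlinarith [mul_nonneg hp0 (sub_nonneg.mpr hI)]
  have hηq : 0 ≤ η - η ^ 2 / 2 := by nlinarith [mul_nonneg hη0 (sub_nonneg.mpr hη1)]
  have h2 : 0 ≤ (η - η ^ 2 / 2) * (S - Y ^ 2) :=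
    mul_nonneg hηq (by linarith)
  nlinarith [hG, h1, h2]

/-- coercivity estimate for the quadratic form, `a₀` playing the role
of `∇w₀` and rows `a k` of `A` the role of `∇wₖ`; `Aᵀm = ∑ k, m k • a k`. -/
theorem stmt_2 (d : ℕ) (hd : 1 ≤ d)
    (p : ℝ) (hp0 : 0 ≤ p) (hp1 : p < 1)
    (η : ℝ) (hη : η = Real.sqrt (1 - p ^ 2))
    (m : EuclideanSpace ℝ (Fin 3)) (hm : ‖m‖ = 1)
    (a₀ : EuclideanSpace ℝ (Fin d)) (a : Fin 3 → EuclideanSpace ℝ (Fin d))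
    (lamMinus : ℝ)
    (hminus : lamMinus = (5 - 2 * η ^ 2) / 8 - Real.sqrt ((5 - 2 * η ^ 2) ^ 2 - 8 * η ^ 2) / 8) :
    lamMinus * (‖a₀‖ ^ 2 + ‖∑ k, m k • a k‖ ^ 2) + (η ^ 2 / 2) * ∑ k, ‖a k‖ ^ 2
      ≤ (1/4) * ‖a₀‖ ^ 2 + η * ∑ k, ‖a k‖ ^ 2 + (1 - η) * ‖∑ k, m k • a k‖ ^ 2
        - p * ⟪a₀, ∑ k, m k • a k⟫ := by
  have hp2 : (0:ℝ) ≤ 1 - p ^ 2 := by nlinarith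
  have hη0 : 0 ≤ η := hη ▸ Real.sqrt_nonneg _
  have hη2 : η ^ 2 = 1 - p ^ 2 := by rw [hη, Real.sq_sqrt hp2]
  have hη1 : η ≤ 1 := by nlinarith
  -- properties of s = sqrt D
  set D : ℝ := (5 - 2 * η ^ 2) ^ 2 - 8 * η ^ 2 with hD
  have hD1 : 1 ≤ D := by nlinarith [sq_nonneg η, sq_nonneg (1 - η^2)]
  have hD0 : 0 ≤ D := by linarith
  set s : ℝ := Real.sqrt D with hs
  have hs2 : s ^ 2 = D := Real.sq_sqrt hD0
  have hs0 : 0 ≤ s := Real.sqrt_nonneg _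
  have hs1 : 1 ≤ s := by nlinarith
  have hsge : 3 - 2 * η ^ 2 ≤ s := by nlinarith [sq_nonneg η]
  have hα : 0 ≤ 1/4 - lamMinus := by rw [hminus]; linarith
  have hβ : 0 ≤ 1 - η^2/2 - lamMinus := by
    rw [hminus]; nlinarith
  have hαβ : 4 * (1/4 - lamMinus) * (1 - η^2/2 - lamMinus) = p^2 := by
    rw [hminus]; nlinarith
  have htr : 1/4 ≤ (1/4 - lamMinus) + (1 - η^2/2 - lamMinus) := by
    rw [hminus]; nlinarith
  -- vector facts
  set T : EuclideanSpace ℝ (Fin d) := ∑ k, m k • a k with hT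
  have hmsq : ∑ k, (m k) ^ 2 = 1 := by
    have := EuclideanSpace.norm_eq m
    rw [hm] at this
    have := (Real.sqrt_eq_one.mp this.symm)
    simpa using this
  have hYS : ‖T‖ ^ 2 ≤ ∑ k, ‖a k‖ ^ 2 := by
    have h1 : ‖T‖ ≤ ∑ k, |m k| * ‖a k‖ := by
      refine (norm_sum_le _ _).trans_eq ?_
      simp [norm_smul]
    have h2 : (∑ k, |m k| * ‖a k‖) ^ 2 ≤ (∑ k, |m k| ^ 2) * ∑ k, ‖a k‖ ^ 2 :=
      Finset.sum_mul_sq_le_sq_mul_sq _ _ _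
    have h3 : (∑ k, |m k| ^ 2) = 1 := by simpa [sq_abs] using hmsq
    have h4 : 0 ≤ ∑ k, |m k| * ‖a k‖ :=
      Finset.sum_nonneg fun k _ => mul_nonneg (abs_nonneg _) (norm_nonneg _)
    calc ‖T‖ ^ 2 ≤ (∑ k, |m k| * ‖a k‖) ^ 2 := by
          exact pow_le_pow_left₀ (norm_nonneg _) h1 2
      _ ≤ ∑ k, ‖a k‖ ^ 2 := by rw [h3] at h2; linarith
  have hI : ⟪a₀, T⟫ ≤ ‖a₀‖ * ‖T‖ := real_inner_le_norm _ _
  exact key_real p η lamMinus ‖a₀‖ ‖T‖ (∑ k, ‖a k‖ ^ 2) ⟪a₀, T⟫ hp0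
    (norm_nonneg _) (norm_nonneg _) hη0 hη1 hα hβ hαβ htr hYS hI
end

section
/- Suppose nonnegative absolutely continuous functions y_m : [0,T] → ℝ (m ∈ ℕ) satisfy y_m' + ε_m y_m ≤ (a_m + ε_m)c_m (sup_{[0,T]} y_{m-1})² + a_m with ε_m = 2^{-m}, a_m = 2^m(2^m-1)K, c_m = 2^{dm}K₄ for constants K, K₄ ≥ 0, d ≥ 1. If additionally y_m(0) ≤ B^{2^m} for some B ≥ 1, then sup_m (sup_{[0,T]} y_m)^{2^{-m}} < ∞. -/
open Set Real

lemma ode_bound {T ε A : ℝ} (hT : 0 < T) (hε : 0 < ε) (hA : 0 ≤ A)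
    {f f' : ℝ → ℝ} (hcont : ContinuousOn f (Set.Icc 0 T))
    (hderiv : ∀ t ∈ Set.Icc (0:ℝ) T, HasDerivAt f (f' t) t)
    (hineq : ∀ t ∈ Set.Icc (0:ℝ) T, f' t + ε * f t ≤ A) :
    ∀ t ∈ Set.Icc (0:ℝ) T, f t ≤ max (f 0) (A / ε) := by
  intro t ht
  have hg := le_gronwallBound_of_liminf_deriv_right_le (f := f) (f' := f') (δ := f 0)
      (K := -ε) (ε := A) (a := 0) (b := T) hcont
      (fun x hx r hr =>
        ((hderiv x (Ico_subset_Icc_self hx)).hasDerivWithinAt.liminf_right_slope_le hr))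
      le_rfl
      (fun x hx => by have := hineq x (Ico_subset_Icc_self hx); linarith)
      t ht
  rw [gronwallBound_of_K_ne_0 (by linarith : (-ε) ≠ 0)] at hg
  simp only [sub_zero] at hg
  set l := Real.exp (-ε * t) with hl
  have hl1 : l ≤ 1 := by
    rw [hl]
    apply Real.exp_le_one_iff.mpr
    nlinarith [ht.1]
  have hl0 : 0 < l := Real.exp_pos _
  have h1 : f 0 ≤ max (f 0) (A / ε) := le_max_left _ _
  have h2 : A / ε ≤ max (f 0) (A / ε) := le_max_right _ _
  have h3 : 0 ≤ A / ε := div_nonneg hA hε.le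
  have hAe : A / -ε * (l - 1) = A / ε * (1 - l) := by rw [div_neg]; ring
  rw [hAe] at hg
  have h4 : f 0 * l ≤ max (f 0) (A / ε) * l := mul_le_mul_of_nonneg_right h1 hl0.le
  have h5 : A / ε * (1 - l) ≤ max (f 0) (A / ε) * (1 - l) :=
    mul_le_mul_of_nonneg_right h2 (by linarith)
  nlinarith [hg]

set_option maxHeartbeats 1000000 in
theorem stmt_19 (T : ℝ) (hT : 0 < T) (d : ℕ) (hd : 1 ≤ d)
    (K K₄ B : ℝ) (hK : 0 ≤ K) (hK₄ : 0 ≤ K₄) (hB : 1 ≤ B)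
    (y y' : ℕ → ℝ → ℝ)
    (M : ℕ → ℝ) (hM : ∀ m, M m = sSup (y m '' Set.Icc 0 T))
    (hcont : ∀ m, ContinuousOn (y m) (Set.Icc 0 T))
    (hnonneg : ∀ m, ∀ t ∈ Set.Icc (0 : ℝ) T, 0 ≤ y m t)
    (hderiv : ∀ m, ∀ t ∈ Set.Icc (0 : ℝ) T, HasDerivAt (y m) (y' m t) t)
    (hrec : ∀ m : ℕ, 1 ≤ m → ∀ t ∈ Set.Icc (0 : ℝ) T,
      y' m t + (2 : ℝ) ^ (-(m : ℤ)) * y m t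
        ≤ ((2 : ℝ) ^ m * ((2 : ℝ) ^ m - 1) * K + (2 : ℝ) ^ (-(m : ℤ)))
            * ((2 : ℝ) ^ (d * m) * K₄) * (M (m - 1)) ^ 2
          + (2 : ℝ) ^ m * ((2 : ℝ) ^ m - 1) * K)
    (hinit : ∀ m : ℕ, y m 0 ≤ B ^ (2 ^ m)) :
    ∃ C : ℝ, ∀ m : ℕ, (M m) ^ ((1 : ℝ) / 2 ^ m) ≤ C := by
  have h0T : (0:ℝ) ∈ Set.Icc (0:ℝ) T := ⟨le_refl 0, hT.le⟩
  have hne : ∀ m, (y m '' Set.Icc 0 T).Nonempty := fun m => ⟨y m 0, 0, h0T, rfl⟩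
  have hbdd : ∀ m, BddAbove (y m '' Set.Icc 0 T) :=
    fun m => (isCompact_Icc.image_of_continuousOn (hcont m)).bddAbove
  have hM0 : ∀ m, 0 ≤ M m := fun m => by
    rw [hM m]
    exact le_trans (hnonneg m 0 h0T) (le_csSup (hbdd m) ⟨0, h0T, rfl⟩)
  have hMle : ∀ (m : ℕ) (c : ℝ), (∀ t ∈ Set.Icc (0:ℝ) T, y m t ≤ c) → M m ≤ c := by
    intro m c h
    rw [hM m]
    exact csSup_le (hne m) (by rintro _ ⟨t, ht, rfl⟩; exact h t ht)
  set P : ℕ → ℝ := fun n => max (M n) 1 with hPdef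
  have hP1 : ∀ n, (1:ℝ) ≤ P n := fun n => le_max_right _ _
  have hPpos : ∀ n, (0:ℝ) < P n := fun n => lt_of_lt_of_le one_pos (hP1 n)
  have hMP : ∀ n, M n ≤ P n := fun n => le_max_left _ _
  set G : ℝ := (K + 1) * (K₄ + 1) + K + 1 with hGdef
  have hG1 : (1:ℝ) ≤ G := by nlinarith
  set R : ℝ := (2:ℝ) ^ (d + 3) with hRdef
  have hR1 : (1:ℝ) ≤ R := one_le_pow₀ (by norm_num)
  -- Key recursion step
  have key : ∀ m : ℕ, P (m + 1) ≤ max (B ^ (2 ^ (m + 1))) (G * R ^ (m + 1) * (P m) ^ 2) := by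
    intro m
    have hrec' := hrec (m + 1) (by omega)
    simp only [Nat.add_sub_cancel] at hrec'
    set x : ℝ := (2:ℝ) ^ (m + 1) with hx
    have hx2 : (2:ℝ) ≤ x := by
      rw [hx]
      calc (2:ℝ) = 2 ^ 1 := (pow_one 2).symm
        _ ≤ 2 ^ (m + 1) := pow_le_pow_right₀ (by norm_num) (by omega)
    have hx0 : (0:ℝ) < x := by linarith
    have hεx : (2:ℝ) ^ (-((m + 1 : ℕ) : ℤ)) = x⁻¹ := by
      rw [hx, zpow_neg, zpow_natCast]
    have hεpos : (0:ℝ) < (2:ℝ) ^ (-((m + 1 : ℕ) : ℤ)) := by rw [hεx]; positivity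
    set w : ℝ := (2:ℝ) ^ (d * (m + 1)) with hw
    have hw1 : (1:ℝ) ≤ w := one_le_pow₀ (by norm_num)
    set A : ℝ := ((2:ℝ) ^ (m + 1) * ((2:ℝ) ^ (m + 1) - 1) * K + (2:ℝ) ^ (-((m + 1 : ℕ) : ℤ)))
        * ((2:ℝ) ^ (d * (m + 1)) * K₄) * (M m) ^ 2
        + (2:ℝ) ^ (m + 1) * ((2:ℝ) ^ (m + 1) - 1) * K with hA
    have t1 : 0 ≤ x * (x - 1) * K :=
      mul_nonneg (mul_nonneg hx0.le (by linarith)) hK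
    have hAnn : 0 ≤ A := by
      rw [hA, ← hx, hεx, ← hw]
      have e1 : 0 ≤ x * (x - 1) * K + x⁻¹ := by positivity
      have e2 : 0 ≤ (x * (x - 1) * K + x⁻¹) * (w * K₄) * (M m) ^ 2 :=
        mul_nonneg (mul_nonneg e1 (by positivity)) (sq_nonneg _)
      linarith
    have hode := ode_bound hT hεpos hAnn (hcont (m + 1)) (hderiv (m + 1)) hrec'
    have hMn : M (m + 1) ≤ max (y (m + 1) 0) (A / (2:ℝ) ^ (-((m + 1 : ℕ) : ℤ))) :=
      hMle (m + 1) _ hode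
    have hdiv : A / (2:ℝ) ^ (-((m + 1 : ℕ) : ℤ)) = x * A := by
      rw [hεx, div_eq_mul_inv, inv_inv, mul_comm]
    -- arithmetic: x * A ≤ G * R^(m+1) * (P m)^2
    have hRn : R ^ (m + 1) = w * x ^ 3 := by
      rw [hRdef, hx, hw, ← pow_mul, ← pow_mul, ← pow_add]
      congr 1
      ring
    have hxne : x ≠ 0 := hx0.ne'
    have step1 : x * A = (x ^ 2 * (x - 1) * K + 1) * (w * K₄) * (M m) ^ 2
        + x ^ 2 * (x - 1) * K := by
      rw [hA, ← hx, hεx, ← hw]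
      field_simp
    have hx3 : (1:ℝ) ≤ x ^ 3 := one_le_pow₀ (by linarith)
    have e1 : x ^ 2 * (x - 1) ≤ x ^ 3 := by nlinarith [sq_nonneg x]
    have c1 : x ^ 2 * (x - 1) * K + 1 ≤ (K + 1) * x ^ 3 := by
      nlinarith [mul_le_mul_of_nonneg_right e1 hK]
    have hmm : (M m) ^ 2 ≤ (P m) ^ 2 := pow_le_pow_left₀ (hM0 m) (hMP m) 2
    have hwk : (0:ℝ) ≤ w * K₄ := mul_nonneg (by linarith) hK₄
    have l1 : (0:ℝ) ≤ x ^ 2 * (x - 1) * K + 1 :=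
      add_nonneg (mul_nonneg (mul_nonneg (sq_nonneg x)
        (by linarith : (0:ℝ) ≤ x - 1)) hK) zero_le_one
    have c2 : (x ^ 2 * (x - 1) * K + 1) * (w * K₄) * (M m) ^ 2
        ≤ (K + 1) * x ^ 3 * (w * K₄) * (P m) ^ 2 :=
      mul_le_mul (mul_le_mul_of_nonneg_right c1 hwk) hmm (sq_nonneg _)
        (by positivity)
    have hp2 : (1:ℝ) ≤ (P m) ^ 2 := one_le_pow₀ (hP1 m)
    have hwp : (1:ℝ) ≤ w * (P m) ^ 2 := by nlinarith
    have c3 : x ^ 2 * (x - 1) * K ≤ x ^ 3 * K * (w * (P m) ^ 2) := by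
      calc x ^ 2 * (x - 1) * K ≤ x ^ 3 * K := mul_le_mul_of_nonneg_right e1 hK
        _ ≤ x ^ 3 * K * (w * (P m) ^ 2) := le_mul_of_one_le_right (by positivity) hwp
    have hfin : (K + 1) * x ^ 3 * (w * K₄) * (P m) ^ 2 + x ^ 3 * K * (w * (P m) ^ 2)
        ≤ G * (w * x ^ 3) * (P m) ^ 2 := by
      have hnn : (0:ℝ) ≤ w * x ^ 3 * (P m) ^ 2 := by positivity
      nlinarith [mul_nonneg hK hnn]
    have harith : x * A ≤ G * R ^ (m + 1) * (P m) ^ 2 := by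
      rw [hRn, step1]
      linarith
    have hMbound : M (m + 1) ≤ max (B ^ (2 ^ (m + 1))) (G * R ^ (m + 1) * (P m) ^ 2) := by
      refine hMn.trans (max_le_max (hinit (m + 1)) ?_)
      rw [hdiv]; exact harith
    exact max_le hMbound (le_trans (one_le_pow₀ hB) (le_max_left _ _))
  -- Take logarithms
  have hGpos : (0:ℝ) < G := by linarith
  have hRpos : (0:ℝ) < R := by linarith
  have logkey : ∀ m : ℕ, Real.log (P (m + 1)) ≤
      max ((2:ℝ) ^ (m + 1) * Real.log B)
        (Real.log G + ((m:ℝ) + 1) * Real.log R + 2 * Real.log (P m)) := by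
    intro m
    have h := key m
    rcases max_cases (B ^ (2 ^ (m + 1))) (G * R ^ (m + 1) * (P m) ^ 2) with
      ⟨he, _⟩ | ⟨he, _⟩ <;> rw [he] at h
    · refine le_max_of_le_left ?_
      calc Real.log (P (m + 1)) ≤ Real.log (B ^ (2 ^ (m + 1))) :=
            Real.log_le_log (hPpos _) h
        _ = ((2 ^ (m + 1) : ℕ) : ℝ) * Real.log B := by rw [Real.log_pow]
        _ = (2:ℝ) ^ (m + 1) * Real.log B := by push_cast; ring
    · refine le_max_of_le_right ?_
      calc Real.log (P (m + 1)) ≤ Real.log (G * R ^ (m + 1) * (P m) ^ 2) :=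
            Real.log_le_log (hPpos _) h
        _ = Real.log G + ((m:ℝ) + 1) * Real.log R + 2 * Real.log (P m) := by
            rw [Real.log_mul (by positivity) (by positivity),
              Real.log_pow (P m) 2,
              Real.log_mul hGpos.ne' (by positivity), Real.log_pow]
            push_cast; ring
  set z0 : ℝ := Real.log (P 0) with hz0def
  set b : ℝ := Real.log B with hbdef
  set g : ℝ := Real.log G with hgdef
  set r : ℝ := Real.log R with hrdef
  have hz0 : 0 ≤ z0 := Real.log_nonneg (hP1 0)
  have hb : 0 ≤ b := Real.log_nonneg hB
  have hg0 : 0 ≤ g := Real.log_nonneg hG1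
  have hr0 : 0 ≤ r := Real.log_nonneg hR1
  set S : ℝ := z0 + b + g + 2 * r with hSdef
  have hnat : ∀ k : ℕ, k + 3 ≤ 2 ^ (k + 2) := by
    intro k
    induction k with
    | zero => norm_num
    | succ k ih => rw [pow_succ]; omega
  have main : ∀ m : ℕ, Real.log (P m) ≤ 2 ^ m * S - g - ((m:ℝ) + 2) * r := by
    intro m
    induction m with
    | zero => simp [hSdef]; linarith
    | succ m ih =>
      have h := logkey m
      rcases max_cases ((2:ℝ) ^ (m + 1) * Real.log B)
        (Real.log G + ((m:ℝ) + 1) * Real.log R + 2 * Real.log (P m)) with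
        ⟨he, _⟩ | ⟨he, _⟩ <;> rw [he] at h
      · -- B case
        have h12 : (1:ℝ) ≤ 2 ^ (m + 1) := one_le_pow₀ (by norm_num)
        have h23 : ((m:ℝ) + 3) ≤ 2 ^ (m + 2) := by
          have := hnat m
          calc ((m:ℝ) + 3) = ((m + 3 : ℕ) : ℝ) := by push_cast; ring
            _ ≤ ((2 ^ (m + 2) : ℕ) : ℝ) := by exact_mod_cast this
            _ = (2:ℝ) ^ (m + 2) := by push_cast; ring
        have e1 : g ≤ 2 ^ (m + 1) * g := le_mul_of_one_le_left hg0 h12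
        have e2 : ((m:ℝ) + 3) * r ≤ 2 ^ (m + 2) * r := mul_le_mul_of_nonneg_right h23 hr0
        have e3 : (0:ℝ) ≤ 2 ^ (m + 1) * z0 := by positivity
        have e4 : (2:ℝ) ^ (m + 2) = 2 ^ (m + 1) * 2 := by rw [pow_succ]
        rw [e4] at e2
        refine h.trans ?_
        rw [hSdef]
        push_cast
        nlinarith [e1, e2, e3]
      · refine h.trans ?_
        have e4 : (2:ℝ) ^ (m + 1) = 2 ^ m * 2 := by rw [pow_succ]
        rw [e4]
        push_cast
        linarith [ih]
  refine ⟨Real.exp S, fun m => ?_⟩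
  have hlog : Real.log (P m) ≤ 2 ^ m * S := by
    have hr2 : (0:ℝ) ≤ ((m:ℝ) + 2) * r :=
      mul_nonneg (by positivity) hr0
    linarith [main m]
  have h1 : M m ≤ Real.exp (2 ^ m * S) := by
    calc M m ≤ P m := hMP m
      _ = Real.exp (Real.log (P m)) := (Real.exp_log (hPpos m)).symm
      _ ≤ Real.exp (2 ^ m * S) := Real.exp_le_exp.mpr hlog
  have h2 : (M m) ^ ((1:ℝ) / 2 ^ m) ≤ (Real.exp (2 ^ m * S)) ^ ((1:ℝ) / 2 ^ m) :=
    Real.rpow_le_rpow (hM0 m) h1 (by positivity)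
  refine h2.trans_eq ?_
  rw [← Real.exp_mul]
  congr 1
  field_simp
end
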